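/- (Lower Bound Lemma) Let α_1,…,α_t ∈ F_2^k be linearly independent vectors over F_2. If there exists a constant c > 0 such that f_{α_i}(n) = Ω(n^c) for each i ∈ [t], then for every α in the F_2-linear span ⟨α_1,…,α_t⟩ we have f_α(n) = Ω(n^c). -/

import Mathlib

open Filter

/-- A family `F` of subsets of `[n]` (modeled as `Fin n`) is `α`-intersecting modulo 2 for a
vector `α ∈ F_2^k` if for each `ℓ ∈ [k]`, any `ℓ` pairwise distinct members of `F`
have an intersection of cardinality congruent to `a_ℓ` modulo 2.
Here `α ⟨ℓ-1,_⟩` denotes the coordinate `a_ℓ` (0-based indexing of a 1-based vector). -/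
def IsIntersecting (k n : ℕ) (α : Fin k → ZMod 2) (F : Finset (Finset (Fin n))) : Prop :=
  ∀ (ℓ : Fin k) (S : Finset (Finset (Fin n))), S ⊆ F → S.card = ℓ.1 + 1 →
    ((S.inf id).card : ZMod 2) = α ℓ

/-- `fMax k n α` is the maximum size of an `α`-intersecting (mod 2) family of subsets of `[n]`. -/
noncomputable def fMax (k n : ℕ) (α : Fin k → ZMod 2) : ℕ :=
  sSup {m | ∃ F : Finset (Finset (Fin n)), IsIntersecting k n α F ∧ F.card = m}


lemma mem_inf_ne {X ι : Type*} [DecidableEq X] [Fintype X] {L : Finset ι} (hL : L.Nonempty)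
    (f : ι → Finset X) (x : X) : x ∈ L.inf f ↔ ∀ l ∈ L, x ∈ f l := by
  induction hL using Finset.Nonempty.cons_induction with
  | singleton a => simp
  | cons a L ha hL ih => simp [Finset.inf_cons, ih, Finset.mem_inter]

lemma bdd_fam (k n : ℕ) (α : Fin k → ZMod 2) :
    BddAbove {m | ∃ F : Finset (Finset (Fin n)), IsIntersecting k n α F ∧ F.card = m} := by
  refine ⟨2 ^ n, fun m hm => ?_⟩
  obtain ⟨F, -, rfl⟩ := hm
  calc F.card ≤ (Finset.univ : Finset (Finset (Fin n))).card := Finset.card_le_univ F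
  _ = 2 ^ n := by simp [Finset.card_univ]

lemma le_fMax {k n : ℕ} {α : Fin k → ZMod 2} {F : Finset (Finset (Fin n))}
    (h : IsIntersecting k n α F) : F.card ≤ fMax k n α :=
  le_csSup (bdd_fam k n α) ⟨F, h, rfl⟩

lemma isIntersecting_empty (k n : ℕ) (α : Fin k → ZMod 2) :
    IsIntersecting k n α (∅ : Finset (Finset (Fin n))) := by
  intro ℓ S hS hcard
  exact absurd (Finset.card_eq_zero.mp (le_antisymm (by simpa using Finset.card_le_card hS) (Nat.zero_le _)) ▸ hcard) (by simp)

lemma fMax_attained (k n : ℕ) (α : Fin k → ZMod 2) :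
    ∃ F : Finset (Finset (Fin n)), IsIntersecting k n α F ∧ F.card = fMax k n α := by
  have h := Nat.sSup_mem (s := {m | ∃ F : Finset (Finset (Fin n)), IsIntersecting k n α F ∧ F.card = m})
    ⟨0, ∅, isIntersecting_empty k n α, rfl⟩ (bdd_fam k n α)
  obtain ⟨F, hF, hc⟩ := h
  exact ⟨F, hF, hc⟩

lemma isIntersecting_subset {k n : ℕ} {α : Fin k → ZMod 2} {F F' : Finset (Finset (Fin n))}
    (h : IsIntersecting k n α F) (hsub : F' ⊆ F) : IsIntersecting k n α F' :=
  fun ℓ S hS => h ℓ S (hS.trans hsub)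


def pairBlock (n : ℕ) (i : Fin (n / 2)) : Finset (Fin n) :=
  {⟨2 * i.1, by have := i.2; omega⟩, ⟨2 * i.1 + 1, by have := i.2; omega⟩}

lemma mem_pairBlock {n : ℕ} {i : Fin (n / 2)} {x : Fin n} :
    x ∈ pairBlock n i ↔ x.1 = 2 * i.1 ∨ x.1 = 2 * i.1 + 1 := by
  simp [pairBlock, Fin.ext_iff]

lemma pairBlock_card {n : ℕ} (i : Fin (n / 2)) : (pairBlock n i).card = 2 := by
  rw [pairBlock, Finset.card_insert_of_notMem (by simp [Fin.ext_iff]), Finset.card_singleton]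

lemma pairBlock_eq {n : ℕ} {i j : Fin (n / 2)} {x : Fin n}
    (hi : x ∈ pairBlock n i) (hj : x ∈ pairBlock n j) : i = j := by
  rw [mem_pairBlock] at hi hj
  exact Fin.ext (by omega)

def pairsG (n : ℕ) (s : Finset (Fin (n / 2))) : Finset (Fin n) := s.biUnion (pairBlock n)

lemma pairsG_inter {n : ℕ} (s s' : Finset (Fin (n / 2))) :
    pairsG n s ∩ pairsG n s' = pairsG n (s ∩ s') := by
  ext x
  simp only [pairsG, Finset.mem_inter, Finset.mem_biUnion]
  constructor
  · rintro ⟨⟨i, hi, hx⟩, ⟨j, hj, hx'⟩⟩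
    exact ⟨i, ⟨hi, pairBlock_eq hx hx' ▸ hj⟩, hx⟩
  · rintro ⟨i, hi, hx⟩
    exact ⟨⟨i, hi.1, hx⟩, ⟨i, hi.2, hx⟩⟩

lemma pairsG_card {n : ℕ} (s : Finset (Fin (n / 2))) : (pairsG n s).card = 2 * s.card := by
  rw [pairsG, Finset.card_biUnion]
  · rw [Finset.sum_congr rfl fun i _ => pairBlock_card i, Finset.sum_const, smul_eq_mul, mul_comm]
  · intro i _ j _ hij
    rw [Function.onFun, Finset.disjoint_left]
    intro x hx hx'
    exact hij (pairBlock_eq hx hx')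

lemma pairsG_inj {n : ℕ} : Function.Injective (pairsG n) := by
  intro s s' h
  ext i
  have key : ∀ u : Finset (Fin (n / 2)), i ∈ u ↔ (⟨2 * i.1, by have := i.2; omega⟩ : Fin n) ∈ pairsG n u := by
    intro u
    simp only [pairsG, Finset.mem_biUnion]
    constructor
    · intro hi; exact ⟨i, hi, by simp [mem_pairBlock]⟩
    · rintro ⟨j, hj, hx⟩
      rw [mem_pairBlock] at hx
      have hx' : 2 * i.1 = 2 * j.1 ∨ 2 * i.1 = 2 * j.1 + 1 := hx
      have : i = j := Fin.ext (by omega)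
      exact this ▸ hj
  rw [key, key, h]

lemma inf_pairsG {n : ℕ} {S : Finset (Finset (Fin n))} (hS : S.Nonempty)
    (h : ∀ a ∈ S, ∃ s, a = pairsG n s) : ∃ s, S.inf id = pairsG n s := by
  induction hS using Finset.Nonempty.cons_induction with
  | singleton a =>
    obtain ⟨s, hs⟩ := h a (by simp)
    exact ⟨s, by simpa using hs⟩
  | cons a L ha hL ih =>
    obtain ⟨s, hs⟩ := h a (by simp)
    obtain ⟨s', hs'⟩ := ih fun b hb => h b (Finset.mem_cons_of_mem hb)
    refine ⟨s ∩ s', ?_⟩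
    rw [Finset.inf_cons, hs', id_eq, hs, ← pairsG_inter]
    rfl
lemma zero_fam_le (k n : ℕ) (α : Fin k → ZMod 2) (hα : ∀ ℓ, α ℓ = 0) :
    (2 : ℕ) ^ (n / 2) ≤ fMax k n α := by
  have hinj := pairsG_inj (n := n)
  have hcard : ((Finset.univ : Finset (Finset (Fin (n / 2)))).image (pairsG n)).card = 2 ^ (n / 2) := by
    rw [Finset.card_image_of_injective _ hinj, Finset.card_univ, Fintype.card_finset, Fintype.card_fin]
  have hint : IsIntersecting k n α ((Finset.univ : Finset (Finset (Fin (n / 2)))).image (pairsG n)) := by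
    intro ℓ S hS hScard
    have hSne : S.Nonempty := Finset.card_pos.mp (by omega)
    obtain ⟨s, hs⟩ := inf_pairsG hSne fun a ha => by
      obtain ⟨s, -, hsa⟩ := Finset.mem_image.mp (hS ha)
      exact ⟨s, hsa.symm⟩
    rw [hs, pairsG_card, hα]
    push_cast
    ring_nf
    rw [show ((2:ZMod 2)) = 0 from rfl, mul_zero]
  calc (2:ℕ) ^ (n/2) = _ := hcard.symm
  _ ≤ fMax k n α := le_fMax hint

lemma nat_block {a b u v p : ℕ} (hu : u < p) (hv : v < p) (h : a * p + u = b * p + v) :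
    a = b ∧ u = v := by
  have hp : 0 < p := Nat.pos_of_ne_zero (by rintro rfl; omega)
  have ha : (a * p + u) / p = a := by
    rw [mul_comm, Nat.mul_add_div hp, Nat.div_eq_of_lt hu, add_zero]
  have hb : (b * p + v) / p = b := by
    rw [mul_comm, Nat.mul_add_div hp, Nat.div_eq_of_lt hv, add_zero]
  have hab : a = b := by rw [← ha, ← hb, h]
  subst hab
  exact ⟨rfl, Nat.add_left_cancel h⟩

section Prod
variable {r p n : ℕ} (hpn : r * p ≤ n)

def embedBlock (hpn : r * p ≤ n) (j : Fin r) : Fin p ↪ Fin n where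
  toFun x := ⟨j.1 * p + x.1, by
    have h1 : j.1 * p + x.1 < (j.1 + 1) * p := by
      rw [Nat.succ_mul]; exact Nat.add_lt_add_left x.2 _
    exact h1.trans_le ((Nat.mul_le_mul_right p (Nat.succ_le_of_lt j.2)).trans hpn)⟩
  inj' x y h := by
    have h' : j.1 * p + x.1 = j.1 * p + y.1 := congrArg Fin.val h
    exact Fin.ext (Nat.add_left_cancel h')

lemma embedBlock_cross {j j' : Fin r} {x x' : Fin p}
    (h : embedBlock hpn j x = embedBlock hpn j' x') : j = j' ∧ x = x' := by
  have h' : j.1 * p + x.1 = j'.1 * p + x'.1 := congrArg Fin.val h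
  obtain ⟨h1, h2⟩ := nat_block x.2 x'.2 h'
  exact ⟨Fin.ext h1, Fin.ext h2⟩

end Prod

lemma sum_fam_le (k n r p m : ℕ) (hr : 0 < r) (hpn : r * p ≤ n)
    (β : Fin r → Fin k → ZMod 2) (α : Fin k → ZMod 2) (hα : ∀ ℓ, α ℓ = ∑ j, β j ℓ)
    (hfam : ∀ j, m ≤ fMax k p (β j)) : m ≤ fMax k n α := by
  -- enumerated families
  have h1 : ∀ j : Fin r, ∃ f : Fin m → Finset (Fin p),
      Function.Injective f ∧ IsIntersecting k p (β j) (Finset.univ.image f) := by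
    intro j
    obtain ⟨F, hF, hFc⟩ := fMax_attained k p (β j)
    obtain ⟨F', hF'sub, hF'c⟩ := Finset.exists_subset_card_eq (le_of_le_of_eq (hfam j) hFc.symm)
    refine ⟨fun l => (F'.equivFin.symm (Fin.cast hF'c.symm l) : Finset (Fin p)), ?_, ?_⟩
    · intro a b h
      have h2 := F'.equivFin.symm.injective (Subtype.ext h)
      have h3 : (Fin.cast hF'c.symm a).val = (Fin.cast hF'c.symm b).val := congrArg Fin.val h2
      exact Fin.ext h3
    · apply isIntersecting_subset hF
      intro a ha
      obtain ⟨l, -, rfl⟩ := Finset.mem_image.mp ha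
      exact hF'sub (F'.equivFin.symm (Fin.cast hF'c.symm l)).2
  choose f hfinj hfint using h1
  set E := embedBlock hpn with hE
  set G : Fin m → Finset (Fin n) :=
    fun l => Finset.univ.biUnion (fun j => (f j l).map (E j)) with hG
  have mem_G : ∀ (l : Fin m) (x : Fin n), x ∈ G l ↔ ∃ j, ∃ y ∈ f j l, E j y = x := by
    intro l x
    simp only [hG, Finset.mem_biUnion, Finset.mem_map, Finset.mem_univ, true_and]
  have hGinj : Function.Injective G := by
    intro l l' h
    apply hfinj ⟨0, hr⟩
    ext y
    have key : ∀ l₀, y ∈ f ⟨0, hr⟩ l₀ ↔ E ⟨0, hr⟩ y ∈ G l₀ := by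
      intro l₀
      rw [mem_G]
      constructor
      · intro hy; exact ⟨_, y, hy, rfl⟩
      · rintro ⟨j, y', hy', hEq⟩
        obtain ⟨rfl, rfl⟩ := embedBlock_cross hpn hEq
        exact hy'
    rw [key, key, h]
  have hint : IsIntersecting k n α (Finset.univ.image G) := by
    intro ℓ S hS hScard
    obtain ⟨L, -, rfl⟩ := Finset.subset_image_iff.mp hS
    have hLcard : L.card = ℓ.1 + 1 := by
      rw [← hScard, Finset.card_image_of_injective _ hGinj]
    have hLne : L.Nonempty := Finset.card_pos.mp (by omega)
    rw [Finset.inf_image]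
    have hcomp : (id ∘ G) = G := rfl
    rw [hcomp]
    have key : L.inf G = Finset.univ.biUnion
        (fun j => (L.inf (fun l => f j l)).map (E j)) := by
      ext x
      rw [mem_inf_ne hLne]
      simp only [Finset.mem_biUnion, Finset.mem_map, Finset.mem_univ, true_and]
      constructor
      · intro h
        obtain ⟨l₀, hl₀⟩ := id hLne
        obtain ⟨j₀, y₀, hy₀, hx₀⟩ := (mem_G l₀ x).mp (h l₀ hl₀)
        refine ⟨j₀, y₀, ?_, hx₀⟩
        rw [mem_inf_ne hLne]
        intro l hl
        obtain ⟨j, y, hy, hx⟩ := (mem_G l x).mp (h l hl)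
        obtain ⟨rfl, rfl⟩ := embedBlock_cross hpn (hx.trans hx₀.symm)
        exact hy
      · rintro ⟨j, y, hy, rfl⟩
        intro l hl
        rw [mem_inf_ne hLne] at hy
        exact (mem_G l _).mpr ⟨j, y, hy l hl, rfl⟩
    rw [key, Finset.card_biUnion]
    · rw [Nat.cast_sum, hα]
      refine Finset.sum_congr rfl fun j _ => ?_
      rw [Finset.card_map]
      have h2 : L.inf (fun l => f j l) = (L.image (f j)).inf id := by
        rw [Finset.inf_image]; rfl
      rw [h2]
      apply hfint j ℓ
      · exact Finset.image_subset_image (Finset.subset_univ L)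
      · rw [Finset.card_image_of_injective _ (hfinj j), hLcard]
    · intro j hj j' hj' hjj'
      rw [Function.onFun, Finset.disjoint_left]
      rintro x hx hx'
      obtain ⟨y, -, rfl⟩ := Finset.mem_map.mp hx
      obtain ⟨y', -, hEq⟩ := Finset.mem_map.mp hx'
      exact hjj' (embedBlock_cross hpn hEq).1.symm
  have hcard : (Finset.univ.image G).card = m := by
    rw [Finset.card_image_of_injective _ hGinj, Finset.card_univ, Fintype.card_fin]
  exact hcard ▸ le_fMax hint

lemma poly_le_pow_half (c : ℝ) : ∀ᶠ n : ℕ in atTop, (n:ℝ) ^ c ≤ (2:ℝ) ^ ((n / 2 : ℕ) : ℝ) := by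
  have hb : 0 < Real.log 2 / 2 := by
    have := Real.log_pos one_lt_two; linarith
  have h := (isLittleO_rpow_exp_pos_mul_atTop c hb).def (by norm_num : (0:ℝ) < 1/2)
  have h2 := (tendsto_natCast_atTop_atTop (R := ℝ)).eventually h
  filter_upwards [h2] with n hn
  have hnn : (0:ℝ) ≤ (n:ℝ) := Nat.cast_nonneg n
  rw [Real.norm_eq_abs, Real.norm_eq_abs, abs_of_nonneg (Real.rpow_nonneg hnn c),
    abs_of_nonneg (Real.exp_pos _).le] at hn
  have key : (1/2 : ℝ) * Real.exp (Real.log 2 / 2 * n) ≤ (2:ℝ) ^ ((n / 2 : ℕ) : ℝ) := by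
    have e1 : Real.exp (Real.log 2 / 2 * n) = (2:ℝ) ^ ((n:ℝ)/2) := by
      rw [Real.rpow_def_of_pos (by norm_num)]
      ring_nf
    rw [e1]
    have e2 : (1/2:ℝ) * 2 ^ ((n:ℝ)/2) = 2 ^ ((n:ℝ)/2 - 1) := by
      rw [Real.rpow_sub (by norm_num), Real.rpow_one]; ring
    rw [e2]
    apply Real.rpow_le_rpow_of_exponent_le (by norm_num)
    have hd : n ≤ n / 2 * 2 + 1 := by omega
    have hd' : (n:ℝ) ≤ ((n / 2 : ℕ) : ℝ) * 2 + 1 := by exact_mod_cast hd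
    linarith
  exact hn.trans key

lemma nat_div_tendsto (r : ℕ) (hr : 0 < r) :
    Tendsto (fun n : ℕ => n / r) atTop atTop := by
  apply tendsto_atTop_atTop.mpr
  intro b
  refine ⟨b * r, fun n hn => ?_⟩
  exact (Nat.le_div_iff_mul_le hr).mpr hn
theorem stmt8 (k t : ℕ) (A : Fin t → Fin k → ZMod 2)
    (hA : LinearIndependent (ZMod 2) A) (c : ℝ) (hc : 0 < c)
    (hbig : ∀ i : Fin t, ∃ ci : ℝ, 0 < ci ∧ ∀ᶠ n : ℕ in atTop,
      ci * (n : ℝ) ^ c ≤ (fMax k n (A i) : ℝ))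
    (α : Fin k → ZMod 2) (hα : α ∈ Submodule.span (ZMod 2) (Set.range A)) :
    ∃ c' : ℝ, 0 < c' ∧ ∀ᶠ n : ℕ in atTop,
      c' * (n : ℝ) ^ c ≤ (fMax k n α : ℝ) := by
  classical
  obtain ⟨cf, hcf⟩ := (Submodule.mem_span_range_iff_exists_fun (ZMod 2)).mp hα
  set T : Finset (Fin t) := Finset.univ.filter (fun i => cf i = 1) with hT
  have hsum : ∀ ℓ, α ℓ = ∑ i ∈ T, A i ℓ := by
    intro ℓ
    have h0 := congrFun hcf ℓ
    rw [Finset.sum_apply] at h0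
    rw [← h0, Finset.sum_filter]
    refine Finset.sum_congr rfl fun i _ => ?_
    have h2 : cf i = 0 ∨ cf i = 1 := by
      have : ∀ x : ZMod 2, x = 0 ∨ x = 1 := by decide
      exact this (cf i)
    rcases h2 with h2 | h2 <;> simp [h2]
  rcases eq_or_ne T ∅ with hTe | hTne
  · -- α = 0 case
    have hα0 : ∀ ℓ, α ℓ = 0 := by intro ℓ; rw [hsum ℓ, hTe]; simp
    refine ⟨1, one_pos, ?_⟩
    filter_upwards [poly_le_pow_half c] with n hn
    rw [one_mul]
    refine hn.trans ?_
    have h3 := zero_fam_le k n α hα0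
    calc (2:ℝ) ^ ((n / 2 : ℕ) : ℝ) = (((2:ℕ) ^ (n / 2) : ℕ) : ℝ) := by
          rw [Real.rpow_natCast]; push_cast; ring
    _ ≤ (fMax k n α : ℝ) := by exact_mod_cast h3
  · -- T nonempty
    have hTne' : T.Nonempty := Finset.nonempty_iff_ne_empty.mpr hTne
    set r := T.card with hr
    have hr0 : 0 < r := Finset.card_pos.mpr hTne'
    choose cif hcifpos hcifev using hbig
    set c₀ : ℝ := T.inf' hTne' cif with hc₀
    have hc₀pos : 0 < c₀ := by
      rw [hc₀, Finset.lt_inf'_iff]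
      exact fun i _ => hcifpos i
    have hden : (0:ℝ) < ((2 * r : ℕ) : ℝ) ^ c :=
      Real.rpow_pos_of_pos (by positivity) c
    refine ⟨c₀ / ((2 * r : ℕ) : ℝ) ^ c, by positivity, ?_⟩
    have hev : ∀ᶠ n : ℕ in atTop, ∀ i ∈ T,
        cif i * ((n / r : ℕ) : ℝ) ^ c ≤ (fMax k (n / r) (A i) : ℝ) := by
      rw [eventually_all_finset]
      intro i _
      exact (nat_div_tendsto r hr0).eventually (hcifev i)
    filter_upwards [hev, eventually_ge_atTop (2 * r)] with n hn hn2
    set p := n / r with hp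
    -- (p : ℝ) ≥ n / (2r)
    have hp2 : (n : ℝ) / ((2 * r : ℕ) : ℝ) ≤ (p : ℝ) := by
      have h4 : n ≤ p * (2 * r) := by
        have e1 : p * r + n % r = n := by rw [hp, mul_comm]; exact Nat.div_add_mod n r
        have e2 : n % r < r := Nat.mod_lt n hr0
        have hp1 : 1 ≤ p := (Nat.one_le_div_iff hr0).mpr (by omega)
        have e3 : r ≤ p * r := by nlinarith
        have e4 : p * (2 * r) = 2 * (p * r) := by ring
        omega
      have h4' : (n : ℝ) ≤ (p : ℝ) * ((2 * r : ℕ) : ℝ) := by exact_mod_cast h4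
      rw [div_le_iff₀ (by positivity)]
      exact h4'
    have hple : c₀ / ((2 * r : ℕ) : ℝ) ^ c * (n : ℝ) ^ c ≤ c₀ * (p : ℝ) ^ c := by
      have h6 : ((n : ℝ) / ((2 * r : ℕ) : ℝ)) ^ c ≤ (p : ℝ) ^ c :=
        Real.rpow_le_rpow (by positivity) hp2 hc.le
      have h7 : ((n : ℝ) / ((2 * r : ℕ) : ℝ)) ^ c
          = (n : ℝ) ^ c / ((2 * r : ℕ) : ℝ) ^ c :=
        Real.div_rpow (Nat.cast_nonneg n) (Nat.cast_nonneg _) c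
      rw [h7] at h6
      calc c₀ / ((2 * r : ℕ) : ℝ) ^ c * (n : ℝ) ^ c
          = c₀ * ((n : ℝ) ^ c / ((2 * r : ℕ) : ℝ) ^ c) := by ring
      _ ≤ c₀ * (p : ℝ) ^ c := by
          exact mul_le_mul_of_nonneg_left h6 hc₀pos.le
    set m : ℕ := ⌈c₀ * (p : ℝ) ^ c⌉₊ with hm
    have hmle : ∀ i ∈ T, m ≤ fMax k p (A i) := by
      intro i hi
      rw [hm, Nat.ceil_le]
      refine le_trans ?_ (hn i hi)
      exact mul_le_mul_of_nonneg_right (Finset.inf'_le cif hi) (Real.rpow_nonneg (Nat.cast_nonneg p) c)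
    -- apply the product construction
    set σ := T.orderIsoOfFin hr.symm with hσ
    have hfin : m ≤ fMax k n α := by
      apply sum_fam_le k n r p m hr0 (by rw [mul_comm]; exact Nat.div_mul_le_self n r)
        (fun j => A (σ j).1) α
      · intro ℓ
        rw [hsum ℓ, ← Finset.sum_attach T (fun i => A i ℓ)]
        exact (Fintype.sum_equiv σ.toEquiv _ _ (fun j => rfl)).symm
      · intro j
        exact hmle (σ j).1 (σ j).2
    calc c₀ / ((2 * r : ℕ) : ℝ) ^ c * (n : ℝ) ^ c ≤ c₀ * (p : ℝ) ^ c := hple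
    _ ≤ (m : ℝ) := Nat.le_ceil _
    _ ≤ (fMax k n α : ℝ) := by exact_mod_cast hfin
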